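/- Let N, K ≥ 1, let f_1,…,f_N : ℝ^n → ℝ, g_1,…,g_m : ℝ^n → ℝ, let Ω ⊆ ℝ^n, let κ be a natural number, and let 𝓔_1,…,𝓔_K ⊆ {1,…,N} be the hyperedges of a connected hypergraph on {1,…,N}. Then the infimum of ∑_{i=1}^N f_i(x) over the set {x ∈ ℝ^n : g_h(x) ≤ 0 for all h, x ∈ Ω, ‖x‖₀ ≤ κ} equals the infimum of ∑_{i=1}^N f_i(x_i) over the set of tuples (x_1,…,x_N, y_1,…,y_K) ∈ (ℝ^n)^N × (ℝ^n)^K such that g_h(x_i) ≤ 0 for all i and h, x_i ∈ Ω for all i, x_i = y_j for every j and every i ∈ 𝓔_j, and ‖y_j‖₀ ≤ κ for all j. -/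
import Mathlib


/-- The SCP problem and its distributed consensus reformulation over a connected
hypergraph have the same optimal value. -/
theorem stmt_1 (n N K m : ℕ) (hN : 1 ≤ N) (hK : 1 ≤ K)
    (f : Fin N → EuclideanSpace ℝ (Fin n) → ℝ)
    (g : Fin m → EuclideanSpace ℝ (Fin n) → ℝ)
    (Ω : Set (EuclideanSpace ℝ (Fin n))) (κ : ℕ)
    (E : Fin K → Set (Fin N))
    (hconn : ∀ i i' : Fin N, ∃ (k : ℕ) (p : Fin (k + 1) → Fin K),
      i ∈ E (p 0) ∧ i' ∈ E (p (Fin.last k)) ∧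
      ∀ l : Fin k, (E (p l.castSucc) ∩ E (p l.succ)).Nonempty) :
    sInf ((fun x : EuclideanSpace ℝ (Fin n) => ((∑ i, f i x : ℝ) : EReal)) ''
        {x | (∀ h, g h x ≤ 0) ∧ x ∈ Ω ∧ Set.ncard {t : Fin n | x t ≠ 0} ≤ κ}) =
      sInf ((fun p : (Fin N → EuclideanSpace ℝ (Fin n)) × (Fin K → EuclideanSpace ℝ (Fin n)) =>
          ((∑ i, f i (p.1 i) : ℝ) : EReal)) ''
        {p | (∀ i h, g h (p.1 i) ≤ 0) ∧ (∀ i, p.1 i ∈ Ω) ∧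
          (∀ j, ∀ i ∈ E j, p.1 i = p.2 j) ∧
          (∀ j, Set.ncard {t : Fin n | p.2 j t ≠ 0} ≤ κ)}) := by
  have key : ∀ p : (Fin N → EuclideanSpace ℝ (Fin n)) × (Fin K → EuclideanSpace ℝ (Fin n)),
      (∀ j, ∀ i ∈ E j, p.1 i = p.2 j) → ∀ i i' : Fin N, p.1 i = p.1 i' := by
    intro p hp i i'
    obtain ⟨k, q, h0, hlast, hstep⟩ := hconn i i'
    have hchain : ∀ l : Fin (k + 1), p.2 (q 0) = p.2 (q l) := by
      intro l
      induction l using Fin.induction with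
      | zero => rfl
      | succ l ih =>
        obtain ⟨j, hj⟩ := hstep l
        rw [ih, ← hp (q l.castSucc) j hj.1, hp (q l.succ) j hj.2]
    rw [hp _ i h0, hp _ i' hlast, ← hchain (Fin.last k)]
  congr 1
  ext v
  simp only [Set.mem_image, Set.mem_setOf_eq]
  constructor
  · rintro ⟨x, ⟨hg, hΩ, hκ⟩, rfl⟩
    exact ⟨(fun _ => x, fun _ => x), ⟨fun i h => hg h, fun i => hΩ, fun j i _ => rfl,
      fun j => hκ⟩, rfl⟩
  · rintro ⟨p, ⟨hg, hΩ, hE, hκ⟩, rfl⟩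
    set i0 : Fin N := ⟨0, hN⟩
    refine ⟨p.1 i0, ⟨fun h => hg i0 h, hΩ i0, ?_⟩, ?_⟩
    · obtain ⟨k, q, h0, _, _⟩ := hconn i0 i0
      rw [hE (q 0) i0 h0]
      exact hκ (q 0)
    · congr 1
      exact Finset.sum_congr rfl fun i _ => by rw [key p hE i0 i]
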